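/- If b > 1/2, then there is a constant C (depending only on b) such that for all y ∈ ℝ, ∫_ℝ ⟨x⟩^{-2b} |x-y|^{-1/2} dx ≤ C ⟨y⟩^{-1/2}. -/

import Mathlib

open MeasureTheory Set

noncomputable def jb (x : ℝ) : ℝ := Real.sqrt (1 + x ^ 2)

lemma jb_pos (x : ℝ) : 0 < jb x := Real.sqrt_pos.mpr (by positivity)

lemma jb_one_le (x : ℝ) : 1 ≤ jb x := by
  have h : Real.sqrt 1 ≤ Real.sqrt (1 + x ^ 2) :=
    Real.sqrt_le_sqrt (by nlinarith [sq_nonneg x])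
  rwa [Real.sqrt_one] at h

lemma jb_sq (x : ℝ) : jb x ^ 2 = 1 + x ^ 2 := Real.sq_sqrt (by positivity)

lemma abs_le_jb (x : ℝ) : |x| ≤ jb x := by
  rw [jb, ← Real.sqrt_sq_eq_abs]
  exact Real.sqrt_le_sqrt (by nlinarith)

lemma jb_mono {a c : ℝ} (h : |a| ≤ |c|) : jb a ≤ jb c := by
  apply Real.sqrt_le_sqrt
  have := pow_le_pow_left₀ (abs_nonneg a) h 2
  simp only [sq_abs] at this
  linarith

lemma jb_lip (a c : ℝ) : jb a ≤ jb c + |a - c| := by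
  rw [jb, ← Real.sqrt_sq (add_nonneg (jb_pos c).le (abs_nonneg _))]
  apply Real.sqrt_le_sqrt
  have h1 := jb_sq c
  have h2 := abs_le_jb c
  have h3 : -c ≤ |c| := neg_le_abs c
  have h4 : c ≤ |c| := le_abs_self c
  have h5 : a - c ≤ |a - c| := le_abs_self _
  have h6 : -(a - c) ≤ |a - c| := neg_le_abs _
  nlinarith [abs_nonneg (a - c), abs_nonneg c]

lemma integrable_comp_abs' {F : ℝ → ℝ} (hF : IntegrableOn F (Set.Ioi 0)) :
    Integrable (fun u => F |u|) := by
  have h1 : IntegrableOn (fun u => F |u|) (Set.Ioi 0) :=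
    hF.congr_fun (fun x hx => by rw [abs_of_pos hx]) measurableSet_Ioi
  have h2 : IntegrableOn (fun u => F |u|) (Set.Iic 0) := by
    rw [IntegrableOn, ← Measure.map_neg_eq_self (volume : Measure ℝ)]
    have m : MeasurableEmbedding fun x : ℝ => -x :=
      (Homeomorph.neg ℝ).measurableEmbedding
    rw [m.restrict_map, m.integrable_map_iff]
    simp_rw [Function.comp_def, abs_neg, neg_preimage, neg_Iic, neg_zero]
    exact Iff.mpr integrableOn_Ici_iff_integrableOn_Ioi h1
  rw [← integrableOn_univ, ← Set.Iic_union_Ioi (a := (0:ℝ))]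
  exact h2.union h1

lemma integral_comp_abs'' {F : ℝ → ℝ} :
    ∫ u : ℝ, F |u| = 2 * ∫ u in Set.Ioi (0:ℝ), F u := integral_comp_abs

lemma integrable_jb_rpow {b : ℝ} (hb : 1 / 2 < b) :
    Integrable (fun x : ℝ => jb x ^ (-(2 * b))) := by
  have h : Integrable (fun x : ℝ => ((1:ℝ) + ‖x‖ ^ 2) ^ (-(2*b) / 2)) :=
    integrable_rpow_neg_one_add_norm_sq (by simp; linarith)
  refine h.congr (Filter.Eventually.of_forall fun x => ?_)
  have hx2 : (0:ℝ) ≤ 1 + x ^ 2 := by positivity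
  simp only [Real.norm_eq_abs, sq_abs, jb, Real.sqrt_eq_rpow]
  rw [← Real.rpow_mul hx2]
  ring_nf

lemma G1_integrable {r : ℝ} (hr : 0 < r) :
    Integrable (fun u : ℝ => Set.indicator (Set.Iic r) (fun s => s ^ (-(1:ℝ)/2)) |u|) := by
  apply integrable_comp_abs'
  rw [IntegrableOn, integrable_indicator_iff measurableSet_Iic, IntegrableOn,
    Measure.restrict_restrict measurableSet_Iic]
  have h : Set.Iic r ∩ Set.Ioi 0 = Set.Ioc 0 r := by rw [Set.inter_comm, Set.Ioi_inter_Iic]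
  rw [h]
  exact (intervalIntegral.intervalIntegrable_rpow' (by norm_num)).1

lemma G1_integral {r : ℝ} (hr : 0 < r) :
    ∫ u : ℝ, Set.indicator (Set.Iic r) (fun s => s ^ (-(1:ℝ)/2)) |u| = 4 * r ^ ((1:ℝ)/2) := by
  rw [integral_comp_abs (f := fun s => Set.indicator (Set.Iic r) (fun s => s ^ (-(1:ℝ)/2)) s),
    setIntegral_indicator measurableSet_Iic, Set.Ioi_inter_Iic,
    ← intervalIntegral.integral_of_le hr.le, integral_rpow (Or.inl (by norm_num))]
  rw [show -(1:ℝ)/2 + 1 = 1/2 by norm_num, Real.zero_rpow (by norm_num)]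
  ring

lemma G4_integrable {R q : ℝ} (hR : 0 < R) (hq : q < -1) :
    Integrable (fun u : ℝ => Set.indicator (Set.Ici R) (fun s => s ^ q) |u|) := by
  apply integrable_comp_abs'
  rw [IntegrableOn, integrable_indicator_iff measurableSet_Ici, IntegrableOn,
    Measure.restrict_restrict measurableSet_Ici]
  have h : Set.Ici R ∩ Set.Ioi 0 = Set.Ici R :=
    Set.inter_eq_left.mpr (fun x hx => lt_of_lt_of_le hR hx)
  rw [h]
  exact Iff.mpr integrableOn_Ici_iff_integrableOn_Ioi (integrableOn_Ioi_rpow_of_lt hq hR)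

lemma G4_integral {R q : ℝ} (hR : 0 < R) (hq : q < -1) :
    ∫ u : ℝ, Set.indicator (Set.Ici R) (fun s => s ^ q) |u| = 2 * (-R ^ (q+1) / (q+1)) := by
  rw [integral_comp_abs (f := fun s => Set.indicator (Set.Ici R) (fun s => s ^ q) s),
    setIntegral_indicator measurableSet_Ici]
  have h : Set.Ioi 0 ∩ Set.Ici R = Set.Ici R :=
    Set.inter_eq_right.mpr (fun x hx => lt_of_lt_of_le hR hx)
  rw [h, integral_Ici_eq_integral_Ioi, integral_Ioi_rpow_of_lt hq hR]

lemma div_rpow_neg {c d e : ℝ} (hc : 0 < c) (hd : 0 < d) :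
    (c / d) ^ (-e) = d ^ e * c ^ (-e) := by
  rw [Real.rpow_neg (by positivity), Real.div_rpow hc.le hd.le, inv_div,
    Real.rpow_neg hc.le, div_eq_mul_inv]

lemma pointwise_bound {b : ℝ} (hb : 1 / 2 < b) (y x : ℝ) :
    jb x ^ (-(2 * b)) * |x - y| ^ (-(1:ℝ) / 2) ≤
      (2 ^ (2*b) * jb y ^ (-(2*b))) *
          Set.indicator (Set.Iic (2 * jb y)) (fun s => s ^ (-(1:ℝ)/2)) |x - y|
        + (5 ^ ((1:ℝ)/4) * jb y ^ (-(1:ℝ)/2)) * jb x ^ (-(2*b))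
        + 2 ^ (2*b) *
          Set.indicator (Set.Ici (2 * jb y)) (fun s => s ^ (-(2*b) + -(1:ℝ)/2)) |x - y| := by
  have ht1 : 1 ≤ jb y := jb_one_le y
  have ht0 : 0 < jb y := jb_pos y
  have hx0 : 0 < jb x := jb_pos x
  have hneg : -(1:ℝ)/2 = -((1:ℝ)/2) := by norm_num
  have nn1 : (0:ℝ) ≤ (2 ^ (2*b) * jb y ^ (-(2*b))) *
      Set.indicator (Set.Iic (2 * jb y)) (fun s => s ^ (-(1:ℝ)/2)) |x - y| :=
    mul_nonneg (mul_nonneg (Real.rpow_nonneg (by norm_num) _) (Real.rpow_nonneg ht0.le _))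
      (Set.indicator_apply_nonneg (fun _ => Real.rpow_nonneg (abs_nonneg _) _))
  have nn2 : (0:ℝ) ≤ (5 ^ ((1:ℝ)/4) * jb y ^ (-(1:ℝ)/2)) * jb x ^ (-(2*b)) :=
    mul_nonneg (mul_nonneg (Real.rpow_nonneg (by norm_num) _) (Real.rpow_nonneg ht0.le _))
      (Real.rpow_nonneg hx0.le _)
  have nn3 : (0:ℝ) ≤ 2 ^ (2*b) *
      Set.indicator (Set.Ici (2 * jb y)) (fun s => s ^ (-(2*b) + -(1:ℝ)/2)) |x - y| :=
    mul_nonneg (Real.rpow_nonneg (by norm_num) _)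
      (Set.indicator_apply_nonneg (fun _ => Real.rpow_nonneg (abs_nonneg _) _))
  -- the "inner region" case
  have main1 : |x - y| ≤ 2 * jb y → jb y / 2 ≤ jb x →
      jb x ^ (-(2 * b)) * |x - y| ^ (-(1:ℝ) / 2) ≤
        (2 ^ (2*b) * jb y ^ (-(2*b))) *
          Set.indicator (Set.Iic (2 * jb y)) (fun s => s ^ (-(1:ℝ)/2)) |x - y| := by
    intro h1 hjx
    rw [Set.indicator_of_mem (Set.mem_Iic.mpr h1)]
    have h7 : jb x ^ (-(2*b)) ≤ (jb y / 2) ^ (-(2*b)) :=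
      Real.rpow_le_rpow_of_nonpos (by linarith) hjx (by linarith)
    have h8 : (jb y / 2) ^ (-(2*b)) = 2 ^ (2*b) * jb y ^ (-(2*b)) := div_rpow_neg ht0 (by norm_num)
    exact mul_le_mul_of_nonneg_right (h7.trans_eq h8) (Real.rpow_nonneg (abs_nonneg _) _)
  rcases lt_or_ge (2 * jb y) |x - y| with h1 | h1
  · -- far region : third term
    have hu0 : (0:ℝ) < |x - y| := lt_trans (by positivity) h1
    have hx2 : |x - y| / 2 ≤ jb x := by
      have h5 : |x - y| ≤ |x| + |y| := abs_sub x y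
      have h6 : |y| ≤ jb y := abs_le_jb y
      have h7 := abs_le_jb x
      linarith
    have h7 : jb x ^ (-(2*b)) ≤ (|x - y| / 2) ^ (-(2*b)) :=
      Real.rpow_le_rpow_of_nonpos (by linarith) hx2 (by linarith)
    have h8 : (|x - y| / 2) ^ (-(2*b)) = 2 ^ (2*b) * |x - y| ^ (-(2*b)) :=
      div_rpow_neg hu0 (by norm_num)
    have key : jb x ^ (-(2 * b)) * |x - y| ^ (-(1:ℝ) / 2) ≤
        2 ^ (2*b) * Set.indicator (Set.Ici (2 * jb y)) (fun s => s ^ (-(2*b) + -(1:ℝ)/2)) |x - y| := by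
      rw [Set.indicator_of_mem (Set.mem_Ici.mpr h1.le)]
      calc jb x ^ (-(2 * b)) * |x - y| ^ (-(1:ℝ) / 2)
          ≤ (2 ^ (2*b) * |x - y| ^ (-(2*b))) * |x - y| ^ (-(1:ℝ) / 2) := by
            apply mul_le_mul_of_nonneg_right _ (Real.rpow_nonneg (abs_nonneg _) _)
            rw [← h8]; exact h7
        _ = 2 ^ (2*b) * |x - y| ^ (-(2*b) + -(1:ℝ)/2) := by
            rw [mul_assoc, ← Real.rpow_add hu0]
    linarith
  · rcases le_or_gt |x - y| 1 with h2 | h2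
    · -- Lipschitz : first term
      have hjx : jb y / 2 ≤ jb x := by
        have hl := jb_lip y x
        have h2' : |y - x| ≤ 1 := by rwa [abs_sub_comm]
        have := jb_one_le x
        linarith
      have := main1 h1 hjx
      linarith
    · rcases lt_or_ge |x| (|y| / 2) with h3 | h3
      · -- middle : second term
        have h5 : |y| - |x| ≤ |x - y| := by
          have := abs_sub_abs_le_abs_sub y x
          rwa [abs_sub_comm] at this
        have h4 : jb y ≤ Real.sqrt 5 * |x - y| := by
          have hs5 : Real.sqrt 5 ^ 2 = 5 := Real.sq_sqrt (by norm_num)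
          have hq : 1 + y ^ 2 ≤ (Real.sqrt 5 * |x - y|) ^ 2 := by
            rw [mul_pow, hs5]
            nlinarith [sq_abs y,
              mul_self_le_mul_self (by positivity : (0:ℝ) ≤ |y| / 2)
                (by linarith : |y| / 2 ≤ |x - y|),
              mul_self_le_mul_self (by norm_num : (0:ℝ) ≤ 1) h2.le]
          have h6 : Real.sqrt (1 + y ^ 2) ≤ Real.sqrt ((Real.sqrt 5 * |x - y|) ^ 2) :=
            Real.sqrt_le_sqrt hq
          rwa [Real.sqrt_sq (by positivity)] at h6
        have h6 : jb y / Real.sqrt 5 ≤ |x - y| := by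
          rw [div_le_iff₀ (by positivity)]
          nlinarith [Real.sqrt_nonneg 5]
        have h7 : |x - y| ^ (-(1:ℝ)/2) ≤ (jb y / Real.sqrt 5) ^ (-(1:ℝ)/2) := by
          rw [hneg]
          exact Real.rpow_le_rpow_of_nonpos
            (div_pos ht0 (Real.sqrt_pos.mpr (by norm_num))) h6 (by norm_num)
        have h8 : (jb y / Real.sqrt 5) ^ (-(1:ℝ)/2) = 5 ^ ((1:ℝ)/4) * jb y ^ (-(1:ℝ)/2) := by
          rw [hneg, div_rpow_neg ht0 (by positivity), ← hneg]
          congr 1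
          rw [Real.sqrt_eq_rpow, ← Real.rpow_mul (by norm_num)]
          norm_num
        have key : jb x ^ (-(2 * b)) * |x - y| ^ (-(1:ℝ) / 2) ≤
            (5 ^ ((1:ℝ)/4) * jb y ^ (-(1:ℝ)/2)) * jb x ^ (-(2*b)) := by
          calc jb x ^ (-(2 * b)) * |x - y| ^ (-(1:ℝ) / 2)
              ≤ jb x ^ (-(2 * b)) * (5 ^ ((1:ℝ)/4) * jb y ^ (-(1:ℝ)/2)) := by
                apply mul_le_mul_of_nonneg_left _ (Real.rpow_nonneg hx0.le _)
                rw [← h8]; exact h7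
            _ = (5 ^ ((1:ℝ)/4) * jb y ^ (-(1:ℝ)/2)) * jb x ^ (-(2*b)) := by ring
        linarith
      · -- outer-middle : first term via monotonicity
        have hjx : jb y / 2 ≤ jb x := by
          have hq : 1 + y ^ 2 ≤ (2 * jb x) ^ 2 := by
            rw [mul_pow]
            nlinarith [jb_sq x, sq_abs x, sq_abs y,
              mul_self_le_mul_self (by positivity : (0:ℝ) ≤ |y| / 2) h3]
          have h6 : Real.sqrt (1 + y ^ 2) ≤ Real.sqrt ((2 * jb x) ^ 2) :=
            Real.sqrt_le_sqrt hq
          rw [Real.sqrt_sq (mul_nonneg (by norm_num) hx0.le)] at h6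
          have : jb y ≤ 2 * jb x := h6
          linarith
        have := main1 h1 hjx
        linarith

theorem stmt_4 (b : ℝ) (hb : 1 / 2 < b) :
    ∃ C : ℝ, 0 < C ∧
      ∀ y : ℝ,
        ∫ x : ℝ, jb x ^ (-(2 * b)) * |x - y| ^ (-(1 : ℝ) / 2) ≤
          C * jb y ^ (-(1 : ℝ) / 2) := by
  have hAint : Integrable (fun x : ℝ => jb x ^ (-(2 * b))) := integrable_jb_rpow hb
  set A := ∫ x : ℝ, jb x ^ (-(2 * b)) with hA
  have hA0 : 0 ≤ A := integral_nonneg fun x => Real.rpow_nonneg (jb_pos x).le _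
  have hb2 : (0:ℝ) < 2 * b - 1/2 := by linarith
  refine ⟨2 ^ (2*b) * 4 * Real.sqrt 2 + 5 ^ ((1:ℝ)/4) * A
      + 2 * Real.sqrt 2 / (2*b - 1/2), ?_, ?_⟩
  · have h1 : (0:ℝ) < 2 ^ (2*b) * 4 * Real.sqrt 2 := by positivity
    have h2 : (0:ℝ) ≤ 5 ^ ((1:ℝ)/4) * A :=
      mul_nonneg (Real.rpow_nonneg (by norm_num) _) hA0
    have h3 : (0:ℝ) < 2 * Real.sqrt 2 / (2*b - 1/2) := div_pos (by positivity) hb2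
    linarith
  intro y
  have ht1 : 1 ≤ jb y := jb_one_le y
  have ht0 : 0 < jb y := jb_pos y
  have hqlt : (-(2*b) + -(1:ℝ)/2) < -1 := by linarith
  have hr0 : (0:ℝ) < 2 * jb y := by linarith
  have hG1 := G1_integrable hr0
  have hG4 := G4_integrable hr0 hqlt
  have hint1 : Integrable (fun x : ℝ => (2 ^ (2*b) * jb y ^ (-(2*b))) *
      Set.indicator (Set.Iic (2 * jb y)) (fun s => s ^ (-(1:ℝ)/2)) |x - y|) :=
    (hG1.comp_sub_right y).const_mul _
  have hint2 : Integrable (fun x : ℝ =>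
      (5 ^ ((1:ℝ)/4) * jb y ^ (-(1:ℝ)/2)) * jb x ^ (-(2*b))) := hAint.const_mul _
  have hint4 : Integrable (fun x : ℝ => 2 ^ (2*b) *
      Set.indicator (Set.Ici (2 * jb y)) (fun s => s ^ (-(2*b) + -(1:ℝ)/2)) |x - y|) :=
    (hG4.comp_sub_right y).const_mul _
  have hint12 : Integrable (fun x : ℝ => (2 ^ (2*b) * jb y ^ (-(2*b))) *
      Set.indicator (Set.Iic (2 * jb y)) (fun s => s ^ (-(1:ℝ)/2)) |x - y| +
      (5 ^ ((1:ℝ)/4) * jb y ^ (-(1:ℝ)/2)) * jb x ^ (-(2*b))) := by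
    exact hint1.add hint2
  have hsum : Integrable (fun x : ℝ => (2 ^ (2*b) * jb y ^ (-(2*b))) *
      Set.indicator (Set.Iic (2 * jb y)) (fun s => s ^ (-(1:ℝ)/2)) |x - y| +
      (5 ^ ((1:ℝ)/4) * jb y ^ (-(1:ℝ)/2)) * jb x ^ (-(2*b)) +
      2 ^ (2*b) * Set.indicator (Set.Ici (2 * jb y))
        (fun s => s ^ (-(2*b) + -(1:ℝ)/2)) |x - y|) := by
    exact hint12.add hint4
  have hmono := integral_mono_of_nonneg
    (f := fun x : ℝ => jb x ^ (-(2 * b)) * |x - y| ^ (-(1 : ℝ) / 2))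
    (Filter.Eventually.of_forall fun x =>
      mul_nonneg (Real.rpow_nonneg (jb_pos x).le _) (Real.rpow_nonneg (abs_nonneg _) _))
    hsum
    (Filter.Eventually.of_forall fun x => pointwise_bound hb y x)
  rw [integral_add hint12 hint4, integral_add hint1 hint2] at hmono
  have e1 : ∫ x : ℝ, (2 ^ (2*b) * jb y ^ (-(2*b))) *
      Set.indicator (Set.Iic (2 * jb y)) (fun s => s ^ (-(1:ℝ)/2)) |x - y| =
      (2 ^ (2*b) * jb y ^ (-(2*b))) * (4 * (2 * jb y) ^ ((1:ℝ)/2)) := by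
    rw [integral_const_mul]
    congr 1
    rw [integral_sub_right_eq_self
      (fun u : ℝ => Set.indicator (Set.Iic (2 * jb y)) (fun s => s ^ (-(1:ℝ)/2)) |u|) y]
    exact G1_integral hr0
  have e2 : ∫ x : ℝ, (5 ^ ((1:ℝ)/4) * jb y ^ (-(1:ℝ)/2)) * jb x ^ (-(2*b)) =
      (5 ^ ((1:ℝ)/4) * jb y ^ (-(1:ℝ)/2)) * A := by
    rw [integral_const_mul]
  have e4 : ∫ x : ℝ, 2 ^ (2*b) *
      Set.indicator (Set.Ici (2 * jb y)) (fun s => s ^ (-(2*b) + -(1:ℝ)/2)) |x - y| =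
      2 ^ (2*b) * (2 * (-(2 * jb y) ^ ((-(2*b) + -(1:ℝ)/2) + 1) / ((-(2*b) + -(1:ℝ)/2) + 1))) := by
    rw [integral_const_mul]
    congr 1
    rw [integral_sub_right_eq_self
      (fun u : ℝ => Set.indicator (Set.Ici (2 * jb y)) (fun s => s ^ (-(2*b) + -(1:ℝ)/2)) |u|) y]
    exact G4_integral hr0 hqlt
  rw [e1, e2, e4] at hmono
  have key1 : (2 ^ (2*b) * jb y ^ (-(2*b))) * (4 * (2 * jb y) ^ ((1:ℝ)/2)) ≤
      2 ^ (2*b) * 4 * Real.sqrt 2 * jb y ^ (-(1:ℝ)/2) := by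
    rw [Real.mul_rpow (by norm_num : (0:ℝ) ≤ 2) ht0.le, ← Real.sqrt_eq_rpow]
    have h1 : jb y ^ (-(2*b)) * jb y ^ ((1:ℝ)/2) = jb y ^ (-(2*b) + (1:ℝ)/2) :=
      (Real.rpow_add ht0 _ _).symm
    have h2 : jb y ^ (-(2*b) + (1:ℝ)/2) ≤ jb y ^ (-(1:ℝ)/2) :=
      Real.rpow_le_rpow_of_exponent_le ht1 (by linarith)
    calc (2 ^ (2*b) * jb y ^ (-(2*b))) * (4 * (Real.sqrt 2 * jb y ^ ((1:ℝ)/2)))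
        = 2 ^ (2*b) * 4 * Real.sqrt 2 * (jb y ^ (-(2*b)) * jb y ^ ((1:ℝ)/2)) := by ring
      _ = 2 ^ (2*b) * 4 * Real.sqrt 2 * jb y ^ (-(2*b) + (1:ℝ)/2) := by rw [h1]
      _ ≤ 2 ^ (2*b) * 4 * Real.sqrt 2 * jb y ^ (-(1:ℝ)/2) :=
          mul_le_mul_of_nonneg_left h2 (by positivity)
  have key4 : 2 ^ (2*b) * (2 * (-(2 * jb y) ^ ((-(2*b) + -(1:ℝ)/2) + 1) /
        ((-(2*b) + -(1:ℝ)/2) + 1))) ≤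
      2 * Real.sqrt 2 / (2*b - 1/2) * jb y ^ (-(1:ℝ)/2) := by
    have hEE : ∀ X : ℝ, -X / ((1:ℝ)/2 - 2*b) = X / (2*b - 1/2) := by
      intro X
      rw [show (1:ℝ)/2 - 2*b = -(2*b - 1/2) by ring, div_neg, neg_div, neg_neg]
    rw [show (-(2*b) + -(1:ℝ)/2) + 1 = (1:ℝ)/2 - 2*b by ring, hEE,
      Real.mul_rpow (by norm_num : (0:ℝ) ≤ 2) ht0.le]
    have h3 : (2:ℝ) ^ (2*b) * 2 ^ ((1:ℝ)/2 - 2*b) = Real.sqrt 2 := by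
      rw [← Real.rpow_add (by norm_num : (0:ℝ) < 2),
        show 2*b + ((1:ℝ)/2 - 2*b) = (1:ℝ)/2 by ring, ← Real.sqrt_eq_rpow]
    have h2 : jb y ^ ((1:ℝ)/2 - 2*b) ≤ jb y ^ (-(1:ℝ)/2) :=
      Real.rpow_le_rpow_of_exponent_le ht1 (by linarith)
    calc 2 ^ (2*b) * (2 * (2 ^ ((1:ℝ)/2 - 2*b) * jb y ^ ((1:ℝ)/2 - 2*b) / (2*b - 1/2)))
        = 2 * (2 ^ (2*b) * 2 ^ ((1:ℝ)/2 - 2*b)) / (2*b - 1/2) * jb y ^ ((1:ℝ)/2 - 2*b) := by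
          ring
      _ = 2 * Real.sqrt 2 / (2*b - 1/2) * jb y ^ ((1:ℝ)/2 - 2*b) := by rw [h3]
      _ ≤ 2 * Real.sqrt 2 / (2*b - 1/2) * jb y ^ (-(1:ℝ)/2) := by
          apply mul_le_mul_of_nonneg_left h2
          exact div_nonneg (by positivity) hb2.le
  have e2' : (5 ^ ((1:ℝ)/4) * jb y ^ (-(1:ℝ)/2)) * A =
      5 ^ ((1:ℝ)/4) * A * jb y ^ (-(1:ℝ)/2) := by ring
  calc ∫ x : ℝ, jb x ^ (-(2 * b)) * |x - y| ^ (-(1 : ℝ) / 2)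
      ≤ (2 ^ (2*b) * jb y ^ (-(2*b))) * (4 * (2 * jb y) ^ ((1:ℝ)/2)) +
          (5 ^ ((1:ℝ)/4) * jb y ^ (-(1:ℝ)/2)) * A +
          2 ^ (2*b) * (2 * (-(2 * jb y) ^ ((-(2*b) + -(1:ℝ)/2) + 1) /
            ((-(2*b) + -(1:ℝ)/2) + 1))) := hmono
    _ ≤ 2 ^ (2*b) * 4 * Real.sqrt 2 * jb y ^ (-(1:ℝ)/2) +
          5 ^ ((1:ℝ)/4) * A * jb y ^ (-(1:ℝ)/2) +
          2 * Real.sqrt 2 / (2*b - 1/2) * jb y ^ (-(1:ℝ)/2) :=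
        add_le_add (add_le_add key1 (le_of_eq e2')) key4
    _ = (2 ^ (2*b) * 4 * Real.sqrt 2 + 5 ^ ((1:ℝ)/4) * A
          + 2 * Real.sqrt 2 / (2*b - 1/2)) * jb y ^ (-(1:ℝ)/2) := by ring
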